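/- Let b ≥ 1 be an integer, let p be a sensor-deployment distribution, and let 0 < ε < 1. If the number of samples n satisfies n ≥ ( ln ε − ln(2b+1) ) / ln(1 − d_min(p)²), then (2b+1)·(1 − d_min(p)²)^n ≤ ε, and consequently the detection error probability satisfies e_n ≤ ε. -/

import Mathlib

open Finset Real MeasureTheory ProbabilityTheory
open scoped ENNReal

/-- The "gap" vector: `d 0 = √p₀`, `d i = √pᵢ - √p_{i-1}` for `i ≥ 1`. -/
noncomputable def dvec (p : ℕ → ℝ) (i : ℕ) : ℝ :=
  if i = 0 then Real.sqrt (p 0) else Real.sqrt (p i) - Real.sqrt (p (i - 1))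

/-- `d_min(p) = min_{0 ≤ i ≤ 2b} d_i(p)`. -/
noncomputable def dmin (b : ℕ) (p : ℕ → ℝ) : ℝ :=
  (Finset.range (2 * b + 1)).inf' (Finset.nonempty_range_iff.mpr (by omega)) (dvec p)

/-- A sensor-deployment distribution: `0 < p₀ < p₁ < ⋯ < p_{2b}` and `∑ pᵢ = 1`. -/
def IsSensorDist (b : ℕ) (p : ℕ → ℝ) : Prop :=
  0 < p 0 ∧ (∀ i, i < 2 * b → p i < p (i + 1)) ∧ ∑ i ∈ Finset.range (2 * b + 1), p i = 1

lemma lintegral_prod_iIndep {Ω : Type*} [MeasurableSpace Ω] {μ : Measure Ω}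
    [IsProbabilityMeasure μ] {ι : Type*} {Z : ι → Ω → ℝ≥0∞}
    (hmeas : ∀ i, Measurable (Z i))
    (hindep : iIndepFun Z μ) (s : Finset ι) :
    ∫⁻ ω, ∏ j ∈ s, Z j ω ∂μ = ∏ j ∈ s, ∫⁻ ω, Z j ω ∂μ := by
  classical
  induction s using Finset.cons_induction with
  | empty => simp
  | cons i s hi ih =>
    have hind : IndepFun (∏ j ∈ s, Z j) (Z i) μ :=
      hindep.indepFun_finsetProd_of_notMem hmeas hi
    rw [show (∏ j ∈ s, Z j) = (fun ω => ∏ j ∈ s, Z j ω) from funext fun ω => Finset.prod_apply ..] at hind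
    have key := lintegral_mul_eq_lintegral_mul_lintegral_of_indepFun''
      (show Measurable fun ω => ∏ j ∈ s, Z j ω from Finset.measurable_prod s fun j _ => hmeas j).aemeasurable (hmeas i).aemeasurable hind
    simp only [Finset.prod_cons, ← ih]
    rw [mul_comm (∫⁻ (ω : Ω), Z i ω ∂μ), ← key]
    exact lintegral_congr fun ω => mul_comm _ _

lemma chernoff_bound {Ω : Type*} [MeasurableSpace Ω] {μ : Measure Ω}
    [IsProbabilityMeasure μ] {n : ℕ} {X : Fin n → Ω → ℕ}
    (hXmeas : ∀ j, Measurable (X j))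
    (hXindep : iIndepFun X μ)
    (f : ℕ → ℝ≥0∞) (S : Set Ω)
    (hS : ∀ ω ∈ S, 1 ≤ ∏ j : Fin n, f (X j ω)) (c : ℝ≥0∞)
    (hc : ∀ j : Fin n, ∫⁻ ω, f (X j ω) ∂μ ≤ c) :
    μ S ≤ c ^ n := by
  have hZmeas : ∀ j : Fin n, Measurable fun ω => f (X j ω) :=
    fun j => measurable_from_top.comp (hXmeas j)
  have hZindep : iIndepFun (fun j ω => f (X j ω)) μ :=
    hXindep.comp (fun _ => f) (fun _ => measurable_from_top)
  have h1 : μ S ≤ μ {ω | 1 ≤ ∏ j : Fin n, f (X j ω)} := measure_mono hS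
  have h2 : μ {ω | 1 ≤ ∏ j : Fin n, f (X j ω)} ≤ ∫⁻ ω, ∏ j : Fin n, f (X j ω) ∂μ := by
    simpa using mul_meas_ge_le_lintegral₀
      (Finset.measurable_prod Finset.univ fun j _ => hZmeas j).aemeasurable (1 : ℝ≥0∞)
  have h3 := lintegral_prod_iIndep (μ := μ) hZmeas hZindep Finset.univ
  calc μ S ≤ _ := h1
    _ ≤ _ := h2
    _ = ∏ j : Fin n, ∫⁻ ω, f (X j ω) ∂μ := h3
    _ ≤ ∏ _j : Fin n, c := Finset.prod_le_prod' fun j _ => hc j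
    _ = c ^ n := by simp

lemma prod_eval {n : ℕ} (x : Fin n → ℕ) {u v : ℕ} (huv : u ≠ v) (α β : ℝ≥0∞) :
    ∏ j : Fin n, (if x j = u then α else if x j = v then β else 1)
      = α ^ (Finset.univ.filter fun j => x j = u).card
        * β ^ (Finset.univ.filter fun j => x j = v).card := by
  classical
  rw [← Finset.prod_filter_mul_prod_filter_not Finset.univ (fun j => x j = u)]
  congr 1
  · rw [← Finset.prod_const]
    exact Finset.prod_congr rfl fun j hj => by simp_all
  · rw [← Finset.prod_filter_mul_prod_filter_not _ (fun j => x j = v), Finset.filter_filter,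
      Finset.filter_filter]
    have e1 : (Finset.univ.filter fun j => ¬x j = u ∧ x j = v)
        = Finset.univ.filter fun j => x j = v := by
      apply Finset.filter_congr; intro j _
      constructor
      · exact fun h => h.2
      · exact fun h => ⟨fun h' => huv (h'.symm.trans h), h⟩
    rw [e1]
    have e2 : ∀ j ∈ Finset.univ.filter fun j : Fin n => ¬x j = u ∧ ¬x j = v,
        (if x j = u then α else if x j = v then β else 1) = 1 := by
      intro j hj; simp only [Finset.mem_filter] at hj
      simp [hj.2.1, hj.2.2]
    rw [Finset.prod_congr rfl e2, Finset.prod_const_one, mul_one, ← Finset.prod_const]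
    refine Finset.prod_congr rfl fun j hj => ?_
    simp only [Finset.mem_filter] at hj
    rw [if_neg (fun h => huv (h.symm.trans hj.2)), if_pos hj.2]

lemma lint_eval {Ω : Type*} [MeasurableSpace Ω] {μ : Measure Ω}
    [IsProbabilityMeasure μ] {Y : Ω → ℕ} (hY : Measurable Y) {u v : ℕ} (huv : u ≠ v)
    {a c : ℝ} (ha : 0 ≤ a) (hc : 0 ≤ c)
    (hu : μ {ω | Y ω = u} = ENNReal.ofReal a) (hv : μ {ω | Y ω = v} = ENNReal.ofReal c)
    (α β : ℝ≥0∞) :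
    ∫⁻ ω, (if Y ω = u then α else if Y ω = v then β else 1) ∂μ
      = α * ENNReal.ofReal a + β * ENNReal.ofReal c + ENNReal.ofReal (1 - a - c) := by
  classical
  have hA : MeasurableSet {ω | Y ω = u} := hY (measurableSet_singleton u)
  have hB : MeasurableSet {ω | Y ω = v} := hY (measurableSet_singleton v)
  have hdisj : Disjoint {ω | Y ω = u} {ω | Y ω = v} := by
    rw [Set.disjoint_left]; rintro ω h1 h2; exact huv ((Set.mem_setOf_eq ▸ h1).symm.trans h2)
  have hfe : (fun ω => (if Y ω = u then α else if Y ω = v then β else 1))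
      = fun ω => Set.indicator {ω | Y ω = u} (fun _ => α) ω
          + Set.indicator {ω | Y ω = v} (fun _ => β) ω
          + Set.indicator ({ω | Y ω = u} ∪ {ω | Y ω = v})ᶜ (fun _ => 1) ω := by
    funext ω
    by_cases h1 : Y ω = u
    · simp [Set.indicator, h1, huv]
    · by_cases h2 : Y ω = v <;> simp [Set.indicator, h1, h2, Ne.symm huv]
  rw [hfe]
  rw [lintegral_add_right _ ((measurable_const.indicator (hA.union hB).compl)),
      lintegral_add_right _ (measurable_const.indicator hB),
      lintegral_indicator_const hA, lintegral_indicator_const hB,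
      lintegral_indicator_const (hA.union hB).compl]
  rw [hu, hv, one_mul, measure_compl (hA.union hB) (measure_ne_top μ _),
      measure_union hdisj hB, hu, hv, measure_univ]
  congr 1
  rw [← ENNReal.ofReal_add ha hc, ← ENNReal.ofReal_one, ← ENNReal.ofReal_sub _ (by positivity)]
  ring_nf

set_option maxHeartbeats 1000000 in
theorem sample_size_for_error_threshold (b n : ℕ) (hb : 1 ≤ b) (p : ℕ → ℝ)
    (hp : IsSensorDist b p)
    (ε : ℝ) (hε0 : 0 < ε) (hε1 : ε < 1)
    (hn : (Real.log ε - Real.log (2 * (b : ℝ) + 1)) / Real.log (1 - dmin b p ^ 2) ≤ (n : ℝ))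
    {Ω : Type*} [MeasurableSpace Ω] (μ : Measure Ω) [IsProbabilityMeasure μ]
    (X : Fin n → Ω → ℕ) (hXmeas : ∀ j, Measurable (X j))
    (hXindep : iIndepFun X μ)
    (hXdist : ∀ j, ∀ k ≤ 2 * b, μ {ω | X j ω = k} = ENNReal.ofReal (p k))
    (N : ℕ → Ω → ℕ)
    (hN : ∀ k ω, N k ω = (Finset.univ.filter fun j : Fin n => X j ω = k).card) :
    (2 * (b : ℝ) + 1) * (1 - dmin b p ^ 2) ^ n ≤ ε ∧
    (μ {ω | ¬ (0 < N 0 ω ∧ ∀ i < 2 * b, N i ω < N (i + 1) ω)}).toReal ≤ ε := by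
  classical
  obtain ⟨hp0, hmono, hsum⟩ := hp
  have hppos : ∀ i, i ≤ 2 * b → 0 < p i := by
    intro i
    induction i with
    | zero => intro _; exact hp0
    | succ k ih => intro h; exact (ih (by omega)).trans (hmono k (by omega))
  have hpair : ∀ u v : ℕ, u < v → v ≤ 2 * b → p u + p v ≤ 1 := by
    intro u v huv hv
    have he : p u + p v = ∑ i ∈ ({u, v} : Finset ℕ), p i :=
      (Finset.sum_pair (by omega)).symm
    rw [he, ← hsum]
    apply Finset.sum_le_sum_of_subset_of_nonneg
    · intro x hx
      simp only [Finset.mem_insert, Finset.mem_singleton] at hx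
      rcases hx with rfl | rfl <;> simp only [Finset.mem_range] <;> omega
    · intro i hi _
      exact (hppos i (by simpa [Nat.lt_succ_iff] using Finset.mem_range.mp hi)).le
  have hdvec_pos : ∀ i ∈ Finset.range (2 * b + 1), 0 < dvec p i := by
    intro i hi
    rw [Finset.mem_range] at hi
    cases i with
    | zero => simpa [dvec] using Real.sqrt_pos.mpr hp0
    | succ k =>
      simp only [dvec, Nat.succ_ne_zero, if_false, Nat.add_sub_cancel, sub_pos]
      exact Real.sqrt_lt_sqrt (hppos k (by omega)).le (hmono k (by omega))
  set d : ℝ := dmin b p with hd_def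
  have hd0 : 0 < d := by
    rw [hd_def, dmin]
    exact (Finset.lt_inf'_iff _).mpr hdvec_pos
  have hdle : ∀ i ∈ Finset.range (2 * b + 1), d ≤ dvec p i :=
    fun i hi => Finset.inf'_le _ hi
  have hd_le_p0 : d ^ 2 ≤ p 0 := by
    have h1 : d ≤ Real.sqrt (p 0) := by
      simpa [dvec] using hdle 0 (by simp)
    calc d ^ 2 ≤ Real.sqrt (p 0) ^ 2 := by nlinarith
      _ = p 0 := Real.sq_sqrt hp0.le
  have hp0lt : p 0 < 1 := by
    have h01 := hpair 0 1 (by omega) (by omega)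
    have := hmono 0 (by omega)
    linarith
  have hr0 : 0 < 1 - d ^ 2 := by nlinarith
  have hr1 : 1 - d ^ 2 < 1 := by nlinarith
  -- Part 1
  have hB1 : (0 : ℝ) < 2 * (b : ℝ) + 1 := by positivity
  have hlogr : Real.log (1 - d ^ 2) < 0 := Real.log_neg hr0 hr1
  have hmul : (n : ℝ) * Real.log (1 - d ^ 2) ≤ Real.log ε - Real.log (2 * (b : ℝ) + 1) :=
    (div_le_iff_of_neg hlogr).mp hn
  have part1 : (2 * (b : ℝ) + 1) * (1 - d ^ 2) ^ n ≤ ε := by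
    have hpos : 0 < (2 * (b : ℝ) + 1) * (1 - d ^ 2) ^ n := by positivity
    rw [← Real.exp_log hpos, ← Real.exp_log hε0]
    apply Real.exp_le_exp.mpr
    rw [Real.log_mul (ne_of_gt hB1) (pow_ne_zero _ (ne_of_gt hr0)), Real.log_pow]
    push_cast
    linarith
  refine ⟨part1, ?_⟩
  -- Part 2
  set E : ℕ → Set Ω := fun i =>
    if i = 0 then {ω | N 0 ω = 0} else {ω | N i ω ≤ N (i - 1) ω} with hE_def
  have hsub : {ω | ¬ (0 < N 0 ω ∧ ∀ i < 2 * b, N i ω < N (i + 1) ω)}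
      ⊆ ⋃ i ∈ Finset.range (2 * b + 1), E i := by
    intro ω hω
    simp only [Set.mem_setOf_eq] at hω
    by_cases h0 : N 0 ω = 0
    · exact Set.mem_biUnion (Finset.mem_range.mpr (by omega))
        (show ω ∈ E 0 by simp [hE_def, h0])
    · push_neg at hω
      obtain ⟨i, hi, hle⟩ := hω (Nat.pos_of_ne_zero h0)
      refine Set.mem_biUnion (Finset.mem_range.mpr (show i + 1 < 2 * b + 1 by omega)) ?_
      show ω ∈ E (i + 1)
      simp only [hE_def, Nat.succ_ne_zero, if_false, Nat.add_sub_cancel, Set.mem_setOf_eq]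
      exact hle
  have key : ∀ i ∈ Finset.range (2 * b + 1),
      μ (E i) ≤ ENNReal.ofReal (1 - d ^ 2) ^ n := by
    intro i hi
    rw [Finset.mem_range] at hi
    have hdvi : d ≤ dvec p i := hdle i (Finset.mem_range.mpr hi)
    have hofle : ENNReal.ofReal (1 - dvec p i ^ 2) ≤ ENNReal.ofReal (1 - d ^ 2) := by
      apply ENNReal.ofReal_le_ofReal
      nlinarith
    refine le_trans ?_ (pow_le_pow_left' hofle n)
    cases i with
    | zero =>
      -- event N 0 = 0 ; f k = if k = 0 then 0 else if k = 1 then 1 else 1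
      have h01 : (0 : ℕ) ≠ 1 := by omega
      refine chernoff_bound hXmeas hXindep
        (fun k => if k = 0 then 0 else if k = 1 then 1 else 1) (E 0) ?_ _ ?_
      · intro ω hω
        rw [prod_eval _ h01]
        have hcard : (Finset.univ.filter fun j : Fin n => X j ω = 0).card = 0 := by
          rw [← hN]
          simpa [hE_def] using hω
        rw [hcard]
        simp
      · intro j
        rw [lint_eval (hXmeas j) h01 (hppos 0 (by omega)).le (hppos 1 (by omega)).le
          (hXdist j 0 (by omega)) (hXdist j 1 (by omega))]
        apply le_of_eq
        rw [zero_mul, zero_add, one_mul, ← ENNReal.ofReal_add (hppos 1 (by omega)).le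
          (by have := hpair 0 1 (by omega) (by omega); linarith)]
        congr 1
        have : dvec p 0 = Real.sqrt (p 0) := by simp [dvec]
        rw [this, Real.sq_sqrt hp0.le]
        ring
    | succ k =>
      have hk1 : k + 1 ≤ 2 * b := by omega
      set a : ℝ := p k with ha_def
      set c : ℝ := p (k + 1) with hc_def
      have hapos : 0 < a := hppos k (by omega)
      have hcpos : 0 < c := hppos (k + 1) hk1
      have hac : a < c := hmono k (by omega)
      have hac1 : a + c ≤ 1 := hpair k (k + 1) (by omega) hk1
      have hsa : 0 < Real.sqrt a := Real.sqrt_pos.mpr hapos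
      have hsc : 0 < Real.sqrt c := Real.sqrt_pos.mpr hcpos
      set lam : ℝ := Real.sqrt c / Real.sqrt a with hlam_def
      have hlam1 : 1 ≤ lam := by
        rw [hlam_def, le_div_iff₀ hsa, one_mul]
        exact Real.sqrt_le_sqrt hac.le
      have hlampos : 0 < lam := by positivity
      have huv : k ≠ k + 1 := by omega
      refine chernoff_bound hXmeas hXindep
        (fun m => if m = k then ENNReal.ofReal lam else if m = k + 1
          then ENNReal.ofReal (1 / lam) else 1) (E (k + 1)) ?_ _ ?_
      · intro ω hω
        rw [prod_eval _ huv]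
        have hA : (Finset.univ.filter fun j : Fin n => X j ω = k).card = N k ω := (hN k ω).symm
        have hC : (Finset.univ.filter fun j : Fin n => X j ω = k + 1).card = N (k + 1) ω :=
          (hN (k + 1) ω).symm
        rw [hA, hC]
        have hle : N (k + 1) ω ≤ N k ω := by
          simpa [hE_def] using hω
        have hprod : ENNReal.ofReal lam * ENNReal.ofReal (1 / lam) = 1 := by
          rw [← ENNReal.ofReal_mul hlampos.le, mul_one_div, div_self (ne_of_gt hlampos),
            ENNReal.ofReal_one]
        have hsplit : N k ω = (N k ω - N (k + 1) ω) + N (k + 1) ω :=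
          (Nat.sub_add_cancel hle).symm
        rw [hsplit, pow_add, mul_assoc, ← mul_pow, hprod, one_pow, mul_one]
        exact one_le_pow_of_one_le' (ENNReal.one_le_ofReal.mpr hlam1) _
      · intro j
        rw [lint_eval (hXmeas j) huv hapos.le hcpos.le
          (hXdist j k (by omega)) (hXdist j (k + 1) hk1)]
        apply le_of_eq
        have h1 : ENNReal.ofReal lam * ENNReal.ofReal a
            = ENNReal.ofReal (Real.sqrt a * Real.sqrt c) := by
          rw [← ENNReal.ofReal_mul hlampos.le]
          congr 1
          rw [hlam_def]
          field_simp
          nlinarith [Real.mul_self_sqrt hapos.le]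
        have h2 : ENNReal.ofReal (1 / lam) * ENNReal.ofReal c
            = ENNReal.ofReal (Real.sqrt a * Real.sqrt c) := by
          rw [← ENNReal.ofReal_mul (by positivity)]
          congr 1
          rw [hlam_def]
          field_simp
          nlinarith [Real.mul_self_sqrt hcpos.le]
        rw [h1, h2, ← ENNReal.ofReal_add (by positivity) (by positivity),
          ← ENNReal.ofReal_add (by positivity) (by nlinarith)]
        congr 1
        have hde : dvec p (k + 1) = Real.sqrt c - Real.sqrt a := by
          simp [dvec, ha_def, hc_def]
        rw [hde]
        have hsa2 : Real.sqrt a ^ 2 = a := Real.sq_sqrt hapos.le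
        have hsc2 : Real.sqrt c ^ 2 = c := Real.sq_sqrt hcpos.le
        nlinarith [hsa2, hsc2]
  have hmain : μ {ω | ¬ (0 < N 0 ω ∧ ∀ i < 2 * b, N i ω < N (i + 1) ω)}
      ≤ ENNReal.ofReal ((2 * (b : ℝ) + 1) * (1 - d ^ 2) ^ n) := by
    calc μ _ ≤ μ (⋃ i ∈ Finset.range (2 * b + 1), E i) := measure_mono hsub
      _ ≤ ∑ i ∈ Finset.range (2 * b + 1), μ (E i) := measure_biUnion_finset_le _ _
      _ ≤ ∑ _i ∈ Finset.range (2 * b + 1), ENNReal.ofReal (1 - d ^ 2) ^ n :=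
          Finset.sum_le_sum key
      _ = (2 * b + 1) * ENNReal.ofReal (1 - d ^ 2) ^ n := by
          rw [Finset.sum_const, Finset.card_range, nsmul_eq_mul]; push_cast; ring_nf
      _ = ENNReal.ofReal ((2 * (b : ℝ) + 1) * (1 - d ^ 2) ^ n) := by
          rw [ENNReal.ofReal_mul (by positivity), ENNReal.ofReal_pow hr0.le]
          congr 1
          rw [show (2 * (b : ℝ) + 1) = ((2 * b + 1 : ℕ) : ℝ) by push_cast; ring,
            ENNReal.ofReal_natCast]
          push_cast; ring
  have := hmain.trans (ENNReal.ofReal_le_ofReal part1)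
  exact ENNReal.toReal_le_of_le_ofReal hε0.le this
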